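/- arXiv:1405.1211 — 3 statements merged into one kernel-verified Lean document; each statement's English description precedes it below -/
import Mathlib

section
/- Let Ω ⊆ ℝⁿ be open, let F : ℝ × Ω → ℝ be C², and suppose that for each t the map ξ ↦ ∇_ξ F(t, ξ) is a bijection from Ω onto an open set P ⊆ ℝⁿ, with inverse x ↦ ξ(t, x) jointly C¹, and that Hess_ξ F(t, ξ) is invertible for all (t, ξ). Define u(t, x) = ⟨x, ξ(t,x)⟩ − F(t, ξ(t,x)) on ℝ × P. Then for all (t, x) ∈ ℝ × P, writing ξ = ξ(t,x), one has −∂²u/∂t²(t, x) = ∂²F/∂t²(t, ξ) − ⟨(Hess_ξ F(t, ξ))⁻¹ ∇_ξ(∂F/∂t)(t, ξ), ∇_ξ(∂F/∂t)(t, ξ)⟩. -/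
open Set Matrix

/-- Abbreviation for Euclidean space. -/
abbrev EE (n : ℕ) := EuclideanSpace ℝ (Fin n)

/-- The Hessian matrix of `f : ℝⁿ → ℝ` at a point. -/
noncomputable def hessMat {n : ℕ} (f : EuclideanSpace ℝ (Fin n) → ℝ)
    (y : EuclideanSpace ℝ (Fin n)) : Matrix (Fin n) (Fin n) ℝ :=
  fun i j => fderiv ℝ (fun z => gradient f z) y (EuclideanSpace.single j 1) i

/-- Coordinates of `toDual.symm` in Euclidean space. -/
lemma coordDual {n : ℕ} (L : StrongDual ℝ (EuclideanSpace ℝ (Fin n))) (i : Fin n) :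
    ((InnerProductSpace.toDual ℝ (EuclideanSpace ℝ (Fin n))).symm L) i
      = L (EuclideanSpace.single i 1) := by
  have h := InnerProductSpace.toDual_symm_apply (𝕜 := ℝ)
    (E := EuclideanSpace ℝ (Fin n)) (y := L) (x := EuclideanSpace.single i 1)
  rw [EuclideanSpace.inner_single_right] at h
  simpa using h

lemma gradient_coord {n : ℕ} (f : EuclideanSpace ℝ (Fin n) → ℝ)
    (x : EuclideanSpace ℝ (Fin n)) (i : Fin n) :
    gradient f x i = fderiv ℝ f x (EuclideanSpace.single i 1) :=
  coordDual _ i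

lemma inner_gradient {n : ℕ} (f : EuclideanSpace ℝ (Fin n) → ℝ)
    (x v : EuclideanSpace ℝ (Fin n)) :
    (inner ℝ (gradient f x) v : ℝ) = fderiv ℝ f x v :=
  InnerProductSpace.toDual_symm_apply

/-- decomposition of a Euclidean vector into coordinates -/
lemma euclid_sum {n : ℕ} (w : EuclideanSpace ℝ (Fin n)) :
    w = ∑ j, w j • EuclideanSpace.single j (1 : ℝ) := by
  ext k
  rw [WithLp.ofLp_sum, Finset.sum_apply]
  simp [EuclideanSpace.single_apply]

set_option maxHeartbeats 2000000

/-- Second time derivative of the time-dependent Legendre transform: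
`-∂²u/∂t²(t,x) = ∂²F/∂t²(t,ξ) - ⟨(Hess_ξ F(t,ξ))⁻¹ ∇_ξ(∂F/∂t)(t,ξ), ∇_ξ(∂F/∂t)(t,ξ)⟩`
at `ξ = ξ(t,x)`. -/
theorem legendre_second_time_deriv {n : ℕ}
    (Ω P : Set (EuclideanSpace ℝ (Fin n))) (hΩ : IsOpen Ω) (hP : IsOpen P)
    (F : ℝ → EuclideanSpace ℝ (Fin n) → ℝ)
    (ξ : ℝ → EuclideanSpace ℝ (Fin n) → EuclideanSpace ℝ (Fin n))
    (hF : ContDiffOn ℝ 2 (fun p : ℝ × EuclideanSpace ℝ (Fin n) => F p.1 p.2)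
      (Set.univ ×ˢ Ω))
    (hbij : ∀ t : ℝ, Set.BijOn (fun y => gradient (F t) y) Ω P)
    (hξmem : ∀ t : ℝ, ∀ x ∈ P, ξ t x ∈ Ω)
    (hξright : ∀ t : ℝ, ∀ x ∈ P, gradient (F t) (ξ t x) = x)
    (hξleft : ∀ t : ℝ, ∀ y ∈ Ω, ξ t (gradient (F t) y) = y)
    (hξC1 : ContDiffOn ℝ 1
      (fun p : ℝ × EuclideanSpace ℝ (Fin n) => ξ p.1 p.2) (Set.univ ×ˢ P))
    (hHessInv : ∀ t : ℝ, ∀ y ∈ Ω, IsUnit (hessMat (F t) y))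
    (u : ℝ → EuclideanSpace ℝ (Fin n) → ℝ)
    (hu : ∀ t x, u t x = (inner ℝ x (ξ t x) : ℝ) - F t (ξ t x)) :
    ∀ t : ℝ, ∀ x ∈ P,
      -(deriv (fun s => deriv (fun r => u r x) s) t) =
        deriv (fun s => deriv (fun r => F r (ξ t x)) s) t -
          (((hessMat (F t) (ξ t x))⁻¹ *ᵥ
              (fun i => gradient (fun z => deriv (fun s => F s z) t) (ξ t x) i)) ⬝ᵥ
            (fun i => gradient (fun z => deriv (fun s => F s z) t) (ξ t x) i)) := by
  classical
  intro t x hx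
  set G : ℝ × (EE n) → ℝ := fun p => F p.1 p.2 with hGdef
  set U : Set (ℝ × (EE n)) := Set.univ ×ˢ Ω with hUdef
  have hUopen : IsOpen U := isOpen_univ.prod hΩ
  have hGC2 : ∀ q ∈ U, ContDiffAt ℝ 2 G q := fun q hq =>
    hF.contDiffAt (hUopen.mem_nhds hq)
  set f' : ℝ × (EE n) → (ℝ × (EE n)) →L[ℝ] ℝ := fderiv ℝ G with hf'def
  have hd : ∀ q ∈ U, HasFDerivAt G (f' q) q := fun q hq =>
    ((hGC2 q hq).differentiableAt (by norm_num)).hasFDerivAt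
  -- inclusion of the space variable
  set ι : (EE n) →L[ℝ] ℝ × (EE n) := ContinuousLinearMap.inr ℝ ℝ (EE n) with hιdef
  have hcurveE : ∀ (s : ℝ) (z : (EE n)), HasFDerivAt (fun w : (EE n) => (s, w)) ι z := by
    intro s z
    exact HasFDerivAt.prodMk (hasFDerivAt_const s z) (hasFDerivAt_id z)
  -- spatial derivative of F s
  have hgradF : ∀ (s : ℝ), ∀ z ∈ Ω,
      HasFDerivAt (F s) ((f' (s, z)).comp ι) z := by
    intro s z hz
    exact (hd (s, z) (by simp [hUdef, hz])).comp z (hcurveE s z)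
  have hinnergrad : ∀ (s : ℝ), ∀ z ∈ Ω, ∀ v : (EE n),
      (inner ℝ (gradient (F s) z) v : ℝ) = f' (s, z) (0, v) := by
    intro s z hz v
    rw [inner_gradient, (hgradF s z hz).fderiv]
    simp [hιdef]
  have hgradcoord : ∀ (s : ℝ), ∀ z ∈ Ω, ∀ i,
      gradient (F s) z i = f' (s, z) (0, EuclideanSpace.single i 1) := by
    intro s z hz i
    rw [gradient_coord, (hgradF s z hz).fderiv]
    simp [hιdef]
  -- the time derivative of F at a point of Ω
  have hFt : ∀ (s : ℝ), ∀ z ∈ Ω,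
      HasDerivAt (fun r => F r z) (f' (s, z) (1, 0)) s := by
    intro s z hz
    have hc : HasDerivAt (fun r : ℝ => (r, z)) ((1 : ℝ), (0 : (EE n))) s := by
      simpa using HasDerivAt.prodMk (hasDerivAt_id s) (hasDerivAt_const s z)
    exact (hd (s, z) (by simp [hUdef, hz])).comp_hasDerivAt s hc
  -- the curve ξ · x
  set c : ℝ → (EE n) := fun s => ξ s x with hcdef
  set Ξ : ℝ × (EE n) → (EE n) := fun p => ξ p.1 p.2 with hΞdef
  have hcΩ : ∀ s : ℝ, c s ∈ Ω := fun s => hξmem s x hx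
  have hcU : ∀ s : ℝ, (s, c s) ∈ U := fun s => by simp [hUdef, hcΩ s]
  set w : ℝ → (EE n) := fun s => fderiv ℝ Ξ (s, x) (1, 0) with hwdef
  have hc : ∀ s : ℝ, HasDerivAt c (w s) s := by
    intro s
    have h1 : DifferentiableAt ℝ Ξ (s, x) :=
      (hξC1.contDiffAt ((isOpen_univ.prod hP).mem_nhds (by simp [hx]))).differentiableAt
        one_ne_zero
    have hcv : HasDerivAt (fun r : ℝ => (r, x)) ((1 : ℝ), (0 : (EE n))) s := by
      simpa using HasDerivAt.prodMk (hasDerivAt_id s) (hasDerivAt_const s x)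
    exact h1.hasFDerivAt.comp_hasDerivAt s hcv
  -- first time derivative of u
  have hu1 : ∀ s : ℝ, HasDerivAt (fun r => u r x) (-(f' (s, c s) (1, 0))) s := by
    intro s
    have hG1 : HasDerivAt (fun r => G (r, c r)) (f' (s, c s) (1, w s)) s := by
      have hcv : HasDerivAt (fun r : ℝ => (r, c r)) ((1 : ℝ), w s) s :=
        HasDerivAt.prodMk (hasDerivAt_id s) (hc s)
      exact (hd (s, c s) (hcU s)).comp_hasDerivAt s hcv
    have hi : HasDerivAt (fun r => (inner ℝ x (c r) : ℝ)) ((inner ℝ x (w s) : ℝ)) s := by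
      have := (hasDerivAt_const s x).inner ℝ (hc s)
      simpa using this
    have hsub : HasDerivAt (fun r => (inner ℝ x (c r) : ℝ) - G (r, c r))
        ((inner ℝ x (w s) : ℝ) - f' (s, c s) (1, w s)) s := hi.sub hG1
    have heq : (fun r => u r x) = fun r => (inner ℝ x (c r) : ℝ) - G (r, c r) := by
      funext r; rw [hu r x]
    rw [heq]
    convert hsub using 1
    have hsplit : ((1 : ℝ), w s) = ((1 : ℝ), (0 : (EE n))) + ((0 : ℝ), w s) := by
      simp
    have : f' (s, c s) (1, w s) = f' (s, c s) (1, 0) + f' (s, c s) (0, w s) := by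
      rw [hsplit, map_add]
    rw [this]
    have hinner : f' (s, c s) (0, w s) = (inner ℝ x (w s) : ℝ) := by
      rw [← hinnergrad s (c s) (hcΩ s) (w s), hξright s x hx]
    rw [hinner]; ring
  -- notation for the base point
  set y : (EE n) := ξ t x with hydef
  have hyΩ : y ∈ Ω := hξmem t x hx
  set p : ℝ × (EE n) := (t, y) with hpdef
  have hpU : p ∈ U := by simp [hUdef, hpdef, hyΩ]
  -- second derivative of G
  have hf'C1 : ContDiffAt ℝ 1 f' p := (hGC2 p hpU).fderiv_right (le_refl 2)
  set B : (ℝ × (EE n)) →L[ℝ] (ℝ × (EE n)) →L[ℝ] ℝ := fderiv ℝ f' p with hBdef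
  have hB : HasFDerivAt f' B p := (hf'C1.differentiableAt one_ne_zero).hasFDerivAt
  have hBsymm : ∀ v z : ℝ × (EE n), B v z = B z v := by
    intro v z
    exact second_derivative_symmetric_of_eventually
      (Filter.eventually_of_mem (hUopen.mem_nhds hpU) hd) hB v z
  -- derivative at t of s ↦ f' (s, c s) v
  have hfc : ∀ v : ℝ × (EE n),
      HasDerivAt (fun s => f' (s, c s) v) (B ((1 : ℝ), w t) v) t := by
    intro v
    have hcv : HasDerivAt (fun r : ℝ => (r, c r)) ((1 : ℝ), w t) t :=
      HasDerivAt.prodMk (hasDerivAt_id t) (hc t)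
    have h1 : HasFDerivAt (fun q : ℝ × (EE n) => f' q v)
        ((ContinuousLinearMap.apply ℝ ℝ v).comp B) p := by
      exact (ContinuousLinearMap.apply ℝ ℝ v).hasFDerivAt.comp p hB
    have := h1.comp_hasDerivAt t (by simpa [hpdef, hcdef] using hcv)
    exact this
  -- derivative at t of s ↦ f' (s, y) v (fixed space point)
  have hfy : ∀ v : ℝ × (EE n),
      HasDerivAt (fun s => f' (s, y) v) (B ((1 : ℝ), (0 : (EE n))) v) t := by
    intro v
    have hcv : HasDerivAt (fun r : ℝ => (r, y)) ((1 : ℝ), (0 : (EE n))) t := by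
      simpa using HasDerivAt.prodMk (hasDerivAt_id t) (hasDerivAt_const t y)
    have h1 : HasFDerivAt (fun q : ℝ × (EE n) => f' q v)
        ((ContinuousLinearMap.apply ℝ ℝ v).comp B) p :=
      (ContinuousLinearMap.apply ℝ ℝ v).hasFDerivAt.comp p hB
    have := h1.comp_hasDerivAt t hcv
    exact this
  -- LHS : second time derivative of u
  have hLHS : deriv (fun s => deriv (fun r => u r x) s) t
      = -(B ((1 : ℝ), w t) ((1 : ℝ), (0 : (EE n)))) := by
    have heq : (fun s => deriv (fun r => u r x) s)
        = fun s => -(f' (s, c s) ((1 : ℝ), (0 : (EE n)))) := by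
      funext s; exact (hu1 s).deriv
    rw [heq]
    exact ((hfc ((1 : ℝ), (0 : (EE n)))).neg).deriv
  -- first RHS term : second time derivative of F at fixed point y
  have hRHS1 : deriv (fun s => deriv (fun r => F r y) s) t
      = B ((1 : ℝ), (0 : (EE n))) ((1 : ℝ), (0 : (EE n))) := by
    have heq : (fun s => deriv (fun r => F r y) s)
        = fun s => f' (s, y) ((1 : ℝ), (0 : (EE n))) := by
      funext s; exact (hFt s y hyΩ).deriv
    rw [heq]
    exact (hfy ((1 : ℝ), (0 : (EE n)))).deriv
  -- the vector v : gradient of the time derivative of F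
  set vv : Fin n → ℝ := fun i => B ((0 : ℝ), EuclideanSpace.single i 1) ((1 : ℝ), (0 : (EE n)))
    with hvvdef
  have hvv : (fun i => gradient (fun z => deriv (fun s => F s z) t) y i) = vv := by
    funext i
    have heq : (fun z => deriv (fun s => F s z) t) =ᶠ[nhds y]
        fun z => f' (t, z) ((1 : ℝ), (0 : (EE n))) := by
      filter_upwards [hΩ.mem_nhds hyΩ] with z hz
      exact (hFt t z hz).deriv
    have hder : HasFDerivAt (fun z : (EE n) => f' (t, z) ((1 : ℝ), (0 : (EE n))))
        (((ContinuousLinearMap.apply ℝ ℝ ((1 : ℝ), (0 : (EE n)))).comp B).comp ι) y := by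
      have h1 : HasFDerivAt (fun q : ℝ × (EE n) => f' q ((1 : ℝ), (0 : (EE n))))
          ((ContinuousLinearMap.apply ℝ ℝ ((1 : ℝ), (0 : (EE n)))).comp B) p :=
        (ContinuousLinearMap.apply ℝ ℝ (((1 : ℝ), (0 : EE n)) : ℝ × EE n)).hasFDerivAt.comp p hB
      exact h1.comp y (hcurveE t y)
    have hder' : HasFDerivAt (fun z => deriv (fun s => F s z) t)
        (((ContinuousLinearMap.apply ℝ ℝ ((1 : ℝ), (0 : (EE n)))).comp B).comp ι) y :=
      hder.congr_of_eventuallyEq heq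
    rw [gradient_coord, hder'.fderiv]
    simp [hιdef, hBsymm]
    rfl
  -- the Hessian
  set H : Matrix (Fin n) (Fin n) ℝ := hessMat (F t) y with hHdef
  have hHij : ∀ i j, H i j
      = B ((0 : ℝ), EuclideanSpace.single j 1) ((0 : ℝ), EuclideanSpace.single i 1) := by
    intro i j
    have heq : gradient (F t) =ᶠ[nhds y] fun z =>
        (InnerProductSpace.toDual ℝ (EE n)).symm ((f' (t, z)).comp ι) := by
      filter_upwards [hΩ.mem_nhds hyΩ] with z hz
      show (InnerProductSpace.toDual ℝ (EE n)).symm (fderiv ℝ (F t) z) = _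
      rw [(hgradF t z hz).fderiv]
    set Φ : ((ℝ × (EE n)) →L[ℝ] ℝ) →L[ℝ] (EE n) :=
      ((InnerProductSpace.toDual ℝ (EE n)).symm.toContinuousLinearEquiv.toContinuousLinearMap).comp
        ((ContinuousLinearMap.compL ℝ (EE n) (ℝ × (EE n)) ℝ).flip ι) with hΦdef
    have hΦ : ∀ L : (ℝ × (EE n)) →L[ℝ] ℝ,
        Φ L = (InnerProductSpace.toDual ℝ (EE n)).symm (L.comp ι) := fun L => rfl
    have hf't : HasFDerivAt (fun z : (EE n) => f' (t, z)) (B.comp ι) y :=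
      hB.comp y (hcurveE t y)
    have hder : HasFDerivAt (fun z : (EE n) =>
        (InnerProductSpace.toDual ℝ (EE n)).symm ((f' (t, z)).comp ι))
        (Φ.comp (B.comp ι)) y := by
      have := Φ.hasFDerivAt.comp y hf't
      apply this.congr_of_eventuallyEq
      filter_upwards with z
      exact (hΦ (f' (t, z))).symm
    have hder' : HasFDerivAt (gradient (F t)) (Φ.comp (B.comp ι)) y :=
      hder.congr_of_eventuallyEq heq
    show fderiv ℝ (fun z => gradient (F t) z) y (EuclideanSpace.single j 1) i = _
    rw [show (fun z => gradient (F t) z) = gradient (F t) from rfl, hder'.fderiv]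
    have hιa : ι (EuclideanSpace.single j 1) = ((0 : ℝ), EuclideanSpace.single j 1) := rfl
    have : (Φ.comp (B.comp ι)) (EuclideanSpace.single j 1)
        = (InnerProductSpace.toDual ℝ (EE n)).symm
          ((B ((0 : ℝ), EuclideanSpace.single j 1)).comp ι) := by
      rfl
    rw [this, coordDual]
    simp [hιdef]
  -- derivative of the constant map s ↦ gradient (F s) (c s) i
  have hzero : ∀ i, B ((1 : ℝ), w t) ((0 : ℝ), EuclideanSpace.single i 1) = 0 := by
    intro i
    have h1 : HasDerivAt (fun s => f' (s, c s) ((0 : ℝ), EuclideanSpace.single i 1))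
        (B ((1 : ℝ), w t) ((0 : ℝ), EuclideanSpace.single i 1)) t :=
      hfc ((0 : ℝ), EuclideanSpace.single i 1)
    have heq : (fun s => f' (s, c s) ((0 : ℝ), EuclideanSpace.single i 1))
        = fun _ : ℝ => x i := by
      funext s
      rw [← hgradcoord s (c s) (hcΩ s) i]
      show (gradient (F s) (ξ s x)) i = x i
      rw [hξright s x hx]
    rw [heq] at h1
    have h2 := h1.deriv
    rw [deriv_const] at h2
    exact h2.symm
  -- decomposition of B (0, w t) against coordinates
  have hBsum : ∀ r : ℝ × (EE n), B ((0 : ℝ), w t) r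
      = ∑ j, w t j * B ((0 : ℝ), EuclideanSpace.single j 1) r := by
    intro r
    have hw : ((0 : ℝ), w t) = ∑ j, w t j • (((0 : ℝ), EuclideanSpace.single j (1 : ℝ)) : ℝ × (EE n)) := by
      have h1 := euclid_sum (w t)
      refine Prod.ext ?_ ?_
      · simp [Prod.fst_sum]
      · simp only [Prod.snd_sum]
        simpa using h1
    rw [hw]
    rw [map_sum]
    rw [ContinuousLinearMap.sum_apply]
    refine Finset.sum_congr rfl fun j _ => ?_
    rw [ContinuousLinearMap.map_smul, ContinuousLinearMap.smul_apply, smul_eq_mul]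
  -- the key linear relation : H *ᵥ w t = -vv
  have hHw : H *ᵥ (fun j => w t j) = fun i => -(vv i) := by
    funext i
    have h0 := hzero i
    have hsplit : ((1 : ℝ), w t) = ((1 : ℝ), (0 : (EE n))) + ((0 : ℝ), w t) := by simp
    rw [hsplit, map_add, ContinuousLinearMap.add_apply] at h0
    have hsym : B ((1 : ℝ), (0 : (EE n))) ((0 : ℝ), EuclideanSpace.single i 1)
        = vv i := hBsymm _ _
    rw [hsym, hBsum] at h0
    have : (H *ᵥ fun j => w t j) i
        = ∑ j, w t j * B ((0 : ℝ), EuclideanSpace.single j 1)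
            ((0 : ℝ), EuclideanSpace.single i 1) := by
      simp only [Matrix.mulVec, dotProduct]
      refine Finset.sum_congr rfl fun j _ => ?_
      rw [hHij i j]; ring
    rw [this]
    linarith
  -- invert the Hessian
  have hdet : IsUnit H.det := by
    rw [← Matrix.isUnit_iff_isUnit_det]
    exact hHessInv t y hyΩ
  have hwinv : (fun j => w t j) = -(H⁻¹ *ᵥ vv) := by
    have h1 : H⁻¹ *ᵥ (H *ᵥ (fun j => w t j)) = (fun j => w t j) := by
      rw [Matrix.mulVec_mulVec, Matrix.nonsing_inv_mul H hdet, Matrix.one_mulVec]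
    rw [← h1, hHw]
    have : (fun i => -(vv i)) = -vv := rfl
    rw [this, Matrix.mulVec_neg]
  -- put everything together
  rw [hLHS, hRHS1, hvv]
  have hdot : (H⁻¹ *ᵥ vv) ⬝ᵥ vv = -(B ((0 : ℝ), w t) ((1 : ℝ), (0 : (EE n)))) := by
    have h1 : H⁻¹ *ᵥ vv = -(fun j => w t j) := by
      rw [hwinv]; simp
    rw [h1, hBsum, neg_dotProduct]
    congr 1
  rw [hdot]
  have hsplit : ((1 : ℝ), w t) = ((1 : ℝ), (0 : (EE n))) + ((0 : ℝ), w t) := by simp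
  rw [hsplit, map_add, ContinuousLinearMap.add_apply]
  ring
end

section
/- Let Ω ⊆ ℝⁿ be open, let F : ℝ × Ω → ℝ be C², and suppose that for each t the map ξ ↦ ∇_ξ F(t, ξ) is a bijection from Ω onto an open set P ⊆ ℝⁿ, with inverse x ↦ ξ(t,x) jointly C¹, and that Hess_ξ F(t, ξ) is invertible for all (t, ξ). Define u(t, x) = ⟨x, ξ(t,x)⟩ − F(t, ξ(t,x)) on ℝ × P. Then ∂²u/∂t² vanishes identically on ℝ × P if and only if for all (t, ξ) ∈ ℝ × Ω, ∂²F/∂t²(t, ξ) = ⟨(Hess_ξ F(t, ξ))⁻¹ ∇_ξ(∂F/∂t)(t, ξ), ∇_ξ(∂F/∂t)(t, ξ)⟩. -/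
open Set Matrix

set_option maxHeartbeats 1000000

lemma grad_pair {n : ℕ} (f : EuclideanSpace ℝ (Fin n) → ℝ) (y v : EuclideanSpace ℝ (Fin n)) :
    (inner ℝ (gradient f y) v : ℝ) = fderiv ℝ f y v := by
  rw [gradient]
  exact InnerProductSpace.toDual_symm_apply

lemma sum_single_eq {n : ℕ} (v : EuclideanSpace ℝ (Fin n)) :
    ∑ j, v j • EuclideanSpace.single j (1:ℝ) = v := by
  have h := (EuclideanSpace.basisFun (Fin n) ℝ).sum_repr v
  simpa [EuclideanSpace.basisFun_apply, EuclideanSpace.basisFun_repr] using h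

lemma clm_matrix_mulVec {n : ℕ} (T : EuclideanSpace ℝ (Fin n) →L[ℝ] EuclideanSpace ℝ (Fin n))
    (v : EuclideanSpace ℝ (Fin n)) :
    ((fun i j => T (EuclideanSpace.single j 1) i) : Matrix (Fin n) (Fin n) ℝ)
      *ᵥ (fun k => v k) = fun i => T v i := by
  have : T v = ∑ j, v j • T (EuclideanSpace.single j (1:ℝ)) := by
    conv_lhs => rw [← sum_single_eq v]
    simp [map_sum]
  calc ((fun i j => T (EuclideanSpace.single j 1) i) : Matrix (Fin n) (Fin n) ℝ) *ᵥ (fun k => v k)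
      = fun i => ∑ j, T (EuclideanSpace.single j 1) i * v j := by
        funext i; simp [Matrix.mulVec, dotProduct]
    _ = fun i => T v i := by
        funext i
        rw [this]
        rw [WithLp.ofLp_sum, Finset.sum_apply]
        simp [mul_comm]

lemma inner_eq_dot {n : ℕ} (a b : EuclideanSpace ℝ (Fin n)) :
    (inner ℝ a b : ℝ) = (fun i => a i) ⬝ᵥ (fun i => b i) := by
  simp [PiLp.inner_apply, dotProduct, RCLike.inner_apply, mul_comm]

/-- Under the Legendre transform, the toric `L²` geodesic equation
`∂²F/∂t² = ⟨(Hess_ξ F)⁻¹ ∇_ξ(∂F/∂t), ∇_ξ(∂F/∂t)⟩` on `ℝ × Ω` is equivalent to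
`∂²u/∂t² ≡ 0` on `ℝ × P`, i.e. `L²` geodesics are segments of symplectic potentials. -/
theorem legendre_geodesic_iff_affine {n : ℕ}
    (Ω P : Set (EuclideanSpace ℝ (Fin n))) (hΩ : IsOpen Ω) (hP : IsOpen P)
    (F : ℝ → EuclideanSpace ℝ (Fin n) → ℝ)
    (ξ : ℝ → EuclideanSpace ℝ (Fin n) → EuclideanSpace ℝ (Fin n))
    (hF : ContDiffOn ℝ 2 (fun p : ℝ × EuclideanSpace ℝ (Fin n) => F p.1 p.2)
      (Set.univ ×ˢ Ω))
    (hbij : ∀ t : ℝ, Set.BijOn (fun y => gradient (F t) y) Ω P)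
    (hξmem : ∀ t : ℝ, ∀ x ∈ P, ξ t x ∈ Ω)
    (hξright : ∀ t : ℝ, ∀ x ∈ P, gradient (F t) (ξ t x) = x)
    (hξleft : ∀ t : ℝ, ∀ y ∈ Ω, ξ t (gradient (F t) y) = y)
    (hξC1 : ContDiffOn ℝ 1
      (fun p : ℝ × EuclideanSpace ℝ (Fin n) => ξ p.1 p.2) (Set.univ ×ˢ P))
    (hHessInv : ∀ t : ℝ, ∀ y ∈ Ω, IsUnit (hessMat (F t) y))
    (u : ℝ → EuclideanSpace ℝ (Fin n) → ℝ)
    (hu : ∀ t x, u t x = (inner ℝ x (ξ t x) : ℝ) - F t (ξ t x)) :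
    (∀ t : ℝ, ∀ x ∈ P, deriv (fun s => deriv (fun r => u r x) s) t = 0) ↔
      (∀ t : ℝ, ∀ y ∈ Ω,
        deriv (fun s => deriv (fun r => F r y) s) t =
          (((hessMat (F t) y)⁻¹ *ᵥ
              (fun i => gradient (fun z => deriv (fun s => F s z) t) y i)) ⬝ᵥ
            (fun i => gradient (fun z => deriv (fun s => F s z) t) y i))) := by
  classical
  have hSopen : IsOpen ((Set.univ : Set ℝ) ×ˢ Ω) := isOpen_univ.prod hΩ
  have hmem : ∀ (t : ℝ) {y : EuclideanSpace ℝ (Fin n)}, y ∈ Ω →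
      ((t, y) : ℝ × EuclideanSpace ℝ (Fin n)) ∈ (Set.univ : Set ℝ) ×ˢ Ω :=
    fun t y hy => ⟨mem_univ _, hy⟩
  set Φ : ℝ × EuclideanSpace ℝ (Fin n) → ℝ := fun p => F p.1 p.2 with hΦdef
  set L : ℝ × EuclideanSpace ℝ (Fin n) → (ℝ × EuclideanSpace ℝ (Fin n) →L[ℝ] ℝ) :=
    fun p => fderiv ℝ Φ p with hLdef
  have hΦ' : ∀ p ∈ (Set.univ : Set ℝ) ×ˢ Ω, HasFDerivAt Φ (L p) p := fun p hp =>
    ((hF.differentiableOn (by norm_num)).differentiableAt (hSopen.mem_nhds hp)).hasFDerivAt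
  have hL1 : ContDiffOn ℝ 1 L ((Set.univ : Set ℝ) ×ˢ Ω) :=
    hF.fderiv_of_isOpen hSopen (by norm_num)
  set B : ℝ × EuclideanSpace ℝ (Fin n) →
      (ℝ × EuclideanSpace ℝ (Fin n)) →L[ℝ] (ℝ × EuclideanSpace ℝ (Fin n)) →L[ℝ] ℝ :=
    fun p => fderiv ℝ L p with hBdef
  have hB : ∀ p ∈ (Set.univ : Set ℝ) ×ˢ Ω, HasFDerivAt L (B p) p := fun p hp =>
    ((hL1.differentiableOn one_ne_zero).differentiableAt (hSopen.mem_nhds hp)).hasFDerivAt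
  have hBsymm : ∀ p ∈ (Set.univ : Set ℝ) ×ˢ Ω, ∀ v w, B p v w = B p w v := by
    intro p hp v w
    refine second_derivative_symmetric_of_eventually (f := Φ) ?_ (hB p hp) v w
    filter_upwards [hSopen.mem_nhds hp] with q hq using hΦ' q hq
  -- restriction to the second variable
  have hFy : ∀ (t : ℝ) {y : EuclideanSpace ℝ (Fin n)}, y ∈ Ω →
      HasFDerivAt (F t)
        ((L (t, y)).comp (ContinuousLinearMap.inr ℝ ℝ (EuclideanSpace ℝ (Fin n)))) y := by
    intro t y hy
    exact (hΦ' (t, y) (hmem t hy)).comp y (hasFDerivAt_prodMk_right t y)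
  have hgradL : ∀ (t : ℝ) {y : EuclideanSpace ℝ (Fin n)}, y ∈ Ω →
      ∀ v, (inner ℝ (gradient (F t) y) v : ℝ) = L (t, y) (0, v) := by
    intro t y hy v
    rw [grad_pair, (hFy t hy).fderiv]
    rfl
  -- time derivative of F
  have hGt : ∀ (t : ℝ) {y : EuclideanSpace ℝ (Fin n)}, y ∈ Ω →
      HasDerivAt (fun s => F s y) (L (t, y) (1, 0)) t := by
    intro t y hy
    exact HasFDerivAt.comp_hasDerivAt (f := fun s : ℝ => ((s, y) : ℝ × EuclideanSpace ℝ (Fin n))) t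
      (hΦ' (t, y) (hmem t hy)) ((hasDerivAt_id t).prodMk (hasDerivAt_const t y))
  -- derivative of L along a curve
  have hLcurve : ∀ (γ : ℝ → ℝ × EuclideanSpace ℝ (Fin n))
      (γ' : ℝ × EuclideanSpace ℝ (Fin n)) (t : ℝ),
      γ t ∈ (Set.univ : Set ℝ) ×ˢ Ω → HasDerivAt γ γ' t →
      ∀ w : ℝ × EuclideanSpace ℝ (Fin n),
      HasDerivAt (fun s => L (γ s) w) (B (γ t) γ' w) t := by
    intro γ γ' t ht hγ w
    have h1 : HasDerivAt (fun s => L (γ s)) (B (γ t) γ') t :=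
      HasFDerivAt.comp_hasDerivAt (f := γ) t (hB _ ht) hγ
    exact (ContinuousLinearMap.apply ℝ ℝ w).hasFDerivAt.comp_hasDerivAt t h1
  -- second time derivative of F
  have hFtt : ∀ (t : ℝ) {y : EuclideanSpace ℝ (Fin n)}, y ∈ Ω →
      deriv (fun s => deriv (fun r => F r y) s) t = B (t, y) (1, 0) (1, 0) := by
    intro t y hy
    have heq : (fun s => deriv (fun r => F r y) s) = fun s => L (s, y) (1, 0) :=
      funext fun s => (hGt s hy).deriv
    rw [heq]
    exact (hLcurve (fun s => (s, y)) (1, 0) t (hmem t hy)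
      ((hasDerivAt_id t).prodMk (hasDerivAt_const t y)) (1, 0)).deriv
  -- gradient in y of the time derivative of F
  have hWpair : ∀ (t : ℝ) {y : EuclideanSpace ℝ (Fin n)}, y ∈ Ω →
      ∀ v, (inner ℝ (gradient (fun z => deriv (fun s => F s z) t) y) v : ℝ)
        = B (t, y) (0, v) (1, 0) := by
    intro t y hy v
    rw [grad_pair]
    have heq : (fun z => deriv (fun s => F s z) t)
        =ᶠ[nhds y] fun z => L (t, z) ((1:ℝ), (0 : EuclideanSpace ℝ (Fin n))) := by
      filter_upwards [hΩ.mem_nhds hy] with z hz using (hGt t hz).deriv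
    rw [heq.fderiv_eq]
    have h2 : HasFDerivAt (fun z => L (t, z) ((1:ℝ), (0 : EuclideanSpace ℝ (Fin n))))
        ((ContinuousLinearMap.apply ℝ ℝ ((1:ℝ), (0 : EuclideanSpace ℝ (Fin n)))).comp
          ((B (t, y)).comp (ContinuousLinearMap.inr ℝ ℝ (EuclideanSpace ℝ (Fin n))))) y :=
      (ContinuousLinearMap.apply ℝ ℝ ((1:ℝ), (0 : EuclideanSpace ℝ (Fin n)))).hasFDerivAt.comp y
        ((hB (t, y) (hmem t hy)).comp y (hasFDerivAt_prodMk_right t y))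
    rw [h2.fderiv]
    rfl
  -- the Hessian as a continuous linear map
  set D : ℝ → EuclideanSpace ℝ (Fin n) → Fin n → (EuclideanSpace ℝ (Fin n) →L[ℝ] ℝ) :=
    fun t y i => (ContinuousLinearMap.apply ℝ ℝ
        (((0:ℝ), EuclideanSpace.single i 1) : ℝ × EuclideanSpace ℝ (Fin n))).comp
      ((B (t, y)).comp (ContinuousLinearMap.inr ℝ ℝ (EuclideanSpace ℝ (Fin n)))) with hDdef
  set Hm : ℝ → EuclideanSpace ℝ (Fin n) →
      (EuclideanSpace ℝ (Fin n) →L[ℝ] EuclideanSpace ℝ (Fin n)) :=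
    fun t y => ∑ i, (D t y i).smulRight (EuclideanSpace.single i (1:ℝ)) with hHmdef
  have hHmco : ∀ (t : ℝ) (y v : EuclideanSpace ℝ (Fin n)) (i : Fin n),
      (Hm t y v) i = B (t, y) (0, v) (0, EuclideanSpace.single i 1) := by
    intro t y v i
    show ((∑ k, (D t y k).smulRight (EuclideanSpace.single k (1:ℝ))) v) i = _
    rw [ContinuousLinearMap.sum_apply, WithLp.ofLp_sum, Finset.sum_apply]
    simp only [ContinuousLinearMap.smulRight_apply, PiLp.smul_apply, WithLp.ofLp_smul, Pi.smul_apply,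
      EuclideanSpace.single_apply, smul_eq_mul, mul_ite, mul_one, mul_zero]
    simp only [Finset.sum_ite_eq, Finset.mem_univ, if_true]
    simp [hDdef, ContinuousLinearMap.apply_apply]
  have hgradHasF : ∀ (t : ℝ) {y : EuclideanSpace ℝ (Fin n)}, y ∈ Ω →
      HasFDerivAt (gradient (F t)) (Hm t y) y := by
    intro t y hy
    have hsum : HasFDerivAt
        (fun z => ∑ i, (L (t, z) ((0:ℝ), EuclideanSpace.single i 1))
          • EuclideanSpace.single i (1:ℝ))
        (Hm t y) y := by
      rw [hHmdef]
      apply HasFDerivAt.fun_sum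
      intro i _
      have hscal : HasFDerivAt
          (fun z => L (t, z) ((0:ℝ), EuclideanSpace.single i 1)) (D t y i) y :=
        (ContinuousLinearMap.apply ℝ ℝ (((0:ℝ), EuclideanSpace.single i 1) : ℝ × EuclideanSpace ℝ (Fin n))).hasFDerivAt.comp y
          ((hB (t, y) (hmem t hy)).comp y (hasFDerivAt_prodMk_right t y))
      exact hscal.smul_const _
    apply hsum.congr_of_eventuallyEq
    filter_upwards [hΩ.mem_nhds hy] with z hz
    calc gradient (F t) z
        = ∑ i, (gradient (F t) z) i • EuclideanSpace.single i (1:ℝ) :=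
          (sum_single_eq _).symm
      _ = ∑ i, (L (t, z) ((0:ℝ), EuclideanSpace.single i 1))
            • EuclideanSpace.single i (1:ℝ) := by
          refine Finset.sum_congr rfl fun i _ => ?_
          rw [← hgradL t hz (EuclideanSpace.single i 1)]
          congr 1
          simp only [EuclideanSpace.inner_single_right]; simp
  -- the Hessian matrix acts as Hm
  have hMat : ∀ (t : ℝ) {y : EuclideanSpace ℝ (Fin n)}, y ∈ Ω →
      hessMat (F t) y = fun i j => (Hm t y) (EuclideanSpace.single j 1) i := by
    intro t y hy
    funext i j
    show fderiv ℝ (fun z => gradient (F t) z) y (EuclideanSpace.single j 1) i = _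
    rw [(hgradHasF t hy).fderiv]
  -- time derivative of ξ
  have hψ : ∀ (t : ℝ) {x : EuclideanSpace ℝ (Fin n)}, x ∈ P →
      DifferentiableAt ℝ (fun s => ξ s x) t := by
    intro t x hx
    have h0 : DifferentiableAt ℝ (fun p : ℝ × EuclideanSpace ℝ (Fin n) => ξ p.1 p.2) (t, x) :=
      (hξC1.differentiableOn one_ne_zero).differentiableAt
        ((isOpen_univ.prod hP).mem_nhds ⟨mem_univ _, hx⟩)
    have hg : DifferentiableAt ℝ (fun s : ℝ => ((s, x) : ℝ × EuclideanSpace ℝ (Fin n))) t :=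
      differentiableAt_id.prodMk (differentiableAt_const x)
    exact h0.comp t hg
  -- first time derivative of u
  have hut : ∀ (s : ℝ) {x : EuclideanSpace ℝ (Fin n)}, x ∈ P →
      HasDerivAt (fun r => u r x) (-(L (s, ξ s x) ((1:ℝ), 0))) s := by
    intro s x hx
    have hy : ξ s x ∈ Ω := hξmem s x hx
    have hψs : HasDerivAt (fun r => ξ r x) (deriv (fun r => ξ r x) s) s :=
      (hψ s hx).hasDerivAt
    have hA : HasDerivAt (fun r => (inner ℝ x (ξ r x) : ℝ))
        (inner ℝ x (deriv (fun r => ξ r x) s) : ℝ) s := by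
      simpa using (hasDerivAt_const s x).inner ℝ hψs
    have hC : HasDerivAt (fun r => F r (ξ r x))
        (L (s, ξ s x) (1, deriv (fun r => ξ r x) s)) s :=
      HasFDerivAt.comp_hasDerivAt
        (f := fun r : ℝ => ((r, ξ r x) : ℝ × EuclideanSpace ℝ (Fin n))) s
        (hΦ' (s, ξ s x) (hmem s hy)) ((hasDerivAt_id s).prodMk hψs)
    have hfun : (fun r => u r x) = fun r => (inner ℝ x (ξ r x) : ℝ) - F r (ξ r x) :=
      funext fun r => hu r x
    rw [hfun]
    have h := hA.sub hC
    refine h.congr_deriv ?_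
    have hsplit : L (s, ξ s x) ((1:ℝ), deriv (fun r => ξ r x) s)
        = L (s, ξ s x) (1, 0) + L (s, ξ s x) (0, deriv (fun r => ξ r x) s) := by
      rw [← map_add]
      congr 1
      simp
    rw [hsplit, ← hgradL s hy (deriv (fun r => ξ r x) s), hξright s x hx]
    ring
  -- second time derivative of u
  have hutt : ∀ (t : ℝ) {x : EuclideanSpace ℝ (Fin n)}, x ∈ P →
      deriv (fun s => deriv (fun r => u r x) s) t
        = -(B (t, ξ t x) (1, deriv (fun r => ξ r x) t) (1, 0)) := by
    intro t x hx
    have heq : (fun s => deriv (fun r => u r x) s) = fun s => -(L (s, ξ s x) (1, 0)) :=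
      funext fun s => (hut s hx).deriv
    rw [heq]
    have hγ : HasDerivAt (fun s => ((s, ξ s x) : ℝ × EuclideanSpace ℝ (Fin n)))
        ((1:ℝ), deriv (fun r => ξ r x) t) t :=
      (hasDerivAt_id t).prodMk (hψ t hx).hasDerivAt
    exact ((hLcurve (fun s => (s, ξ s x)) _ t (hmem t (hξmem t x hx)) hγ (1, 0)).neg).deriv
  -- differentiating ∇F(t, ξ(t,x)) = x in time
  have hC0 : ∀ (t : ℝ) {x : EuclideanSpace ℝ (Fin n)}, x ∈ P →
      ∀ v, B (t, ξ t x) (1, deriv (fun r => ξ r x) t) ((0:ℝ), v) = 0 := by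
    intro t x hx v
    have hγ : HasDerivAt (fun s => ((s, ξ s x) : ℝ × EuclideanSpace ℝ (Fin n)))
        ((1:ℝ), deriv (fun r => ξ r x) t) t :=
      (hasDerivAt_id t).prodMk (hψ t hx).hasDerivAt
    have h1 := hLcurve (fun s => (s, ξ s x)) _ t (hmem t (hξmem t x hx)) hγ ((0:ℝ), v)
    have heq : (fun s => L (s, ξ s x) ((0:ℝ), v)) = fun _ => (inner ℝ x v : ℝ) := by
      funext s
      rw [← hgradL s (hξmem s x hx) v, hξright s x hx]
    rw [heq] at h1
    exact h1.unique (hasDerivAt_const t _)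
  -- the key identity
  have key : ∀ (t : ℝ) {x : EuclideanSpace ℝ (Fin n)}, x ∈ P →
      deriv (fun s => deriv (fun r => u r x) s) t
        = (((hessMat (F t) (ξ t x))⁻¹ *ᵥ
              (fun i => gradient (fun z => deriv (fun s => F s z) t) (ξ t x) i)) ⬝ᵥ
            (fun i => gradient (fun z => deriv (fun s => F s z) t) (ξ t x) i))
          - deriv (fun s => deriv (fun r => F r (ξ t x)) s) t := by
    intro t x hx
    have hy : ξ t x ∈ Ω := hξmem t x hx
    set y := ξ t x with hy'
    set ψ' := deriv (fun r => ξ r x) t with hψ'def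
    set w : EuclideanSpace ℝ (Fin n) :=
      gradient (fun z => deriv (fun s => F s z) t) y with hwdef
    have hsplitB : ∀ v₂ : ℝ × EuclideanSpace ℝ (Fin n),
        B (t, y) ((1:ℝ), ψ') v₂ = B (t, y) (1, 0) v₂ + B (t, y) (0, ψ') v₂ := by
      intro v₂
      have h0 : ((1:ℝ), ψ') = ((1:ℝ), (0 : EuclideanSpace ℝ (Fin n)))
          + ((0:ℝ), ψ') := by simp
      rw [h0, map_add, ContinuousLinearMap.add_apply]
    -- H ψ' has coordinates -(w i)
    have hMψ : hessMat (F t) y *ᵥ (fun i => ψ' i) = fun i => -(w i) := by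
      rw [hMat t hy, clm_matrix_mulVec]
      funext i
      rw [hHmco]
      have h1 := hC0 t hx (EuclideanSpace.single i 1)
      rw [hsplitB] at h1
      have h2 : B (t, y) ((1:ℝ), (0 : EuclideanSpace ℝ (Fin n)))
          ((0:ℝ), EuclideanSpace.single i 1) = w i := by
        rw [hBsymm (t, y) (hmem t hy) ((1:ℝ), (0 : EuclideanSpace ℝ (Fin n)))
          ((0:ℝ), EuclideanSpace.single i 1)]
        rw [← hWpair t hy (EuclideanSpace.single i 1)]
        simp only [EuclideanSpace.inner_single_right]; simp [hwdef]
      linarith [h1, h2]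
    have hdet : IsUnit (hessMat (F t) y).det :=
      (Matrix.isUnit_iff_isUnit_det _).mp (hHessInv t y hy)
    have hinv : (hessMat (F t) y)⁻¹ *ᵥ (fun i => w i) = fun i => -(ψ' i) := by
      have h3 : (fun i => w i) = hessMat (F t) y *ᵥ (fun i => -(ψ' i)) := by
        have h4 : (fun i => -(ψ' i)) = -(fun i => ψ' i) := rfl
        rw [h4, Matrix.mulVec_neg, hMψ]
        funext i; simp
      rw [h3, Matrix.mulVec_mulVec, Matrix.nonsing_inv_mul _ hdet, Matrix.one_mulVec]
    have hdot : (((hessMat (F t) y)⁻¹ *ᵥ (fun i => w i)) ⬝ᵥ (fun i => w i))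
        = -(inner ℝ w ψ' : ℝ) := by
      rw [hinv]
      have h5 : (fun i => -(ψ' i)) ⬝ᵥ (fun i => w i) = -((fun i => ψ' i) ⬝ᵥ (fun i => w i)) := by
        simp [dotProduct, Finset.sum_neg_distrib]
      rw [h5, ← inner_eq_dot, real_inner_comm]
    have h6 : B (t, y) ((0:ℝ), ψ') ((1:ℝ), (0 : EuclideanSpace ℝ (Fin n)))
        = (inner ℝ w ψ' : ℝ) := (hWpair t hy ψ').symm
    rw [hutt t hx, hFtt t hy, hdot, hsplitB, h6]
    ring
  constructor
  · intro h t y hy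
    have hx : gradient (F t) y ∈ P := (hbij t).mapsTo hy
    have h1 := key t hx
    have h0 := h t _ hx
    rw [hξleft t y hy] at h1
    rw [h0] at h1
    linarith [h1]
  · intro h t x hx
    have h1 := key t hx
    have h2 := h t (ξ t x) (hξmem t x hx)
    rw [h1, ← h2]
    ring
end

section
/- Let Ω ⊆ ℝⁿ be open, let F : Ω → ℝ be C³ with everywhere invertible Hessian, and suppose the gradient map ∇F is a bijection from Ω onto an open set P ⊆ ℝⁿ with C² inverse x ↦ ξ(x). Let u : P → ℝ be the Legendre transform u(x) = ⟨x, ξ(x)⟩ − F(ξ(x)), so that Hess u(x) = (Hess F(ξ(x)))⁻¹. Then for every C² function g : P → ℝ and every ξ ∈ Ω, Σ_{j,k} (Hess F(ξ))⁻¹_{jk} · ∂²(g ∘ ∇F)/∂ξ_j ∂ξ_k (ξ) = Σ_j ∂/∂x_j [ Σ_k (Hess u)⁻¹_{jk} ∂g/∂x_k ] evaluated at x = ∇F(ξ). -/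
open Set

namespace LegendreAux

variable {n : ℕ}

noncomputable def e (i : Fin n) : EuclideanSpace ℝ (Fin n) := EuclideanSpace.single i 1

lemma sum_single (v : EuclideanSpace ℝ (Fin n)) : v = ∑ i, v i • e i := by
  ext j
  rw [show ((∑ i, v i • e i : EuclideanSpace ℝ (Fin n)) j)
      = ∑ i, (v i • (e i : EuclideanSpace ℝ (Fin n))) j from by rw [WithLp.ofLp_sum, Finset.sum_apply]]
  simp [e, EuclideanSpace.single_apply]

lemma fderiv_apply_sum (f : EuclideanSpace ℝ (Fin n) → ℝ) (x v : EuclideanSpace ℝ (Fin n)) :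
    fderiv ℝ f x v = ∑ m, v m * fderiv ℝ f x (e m) := by
  conv_lhs => rw [sum_single v]
  rw [map_sum]
  exact Finset.sum_congr rfl fun m _ => by rw [map_smul]; rfl

lemma fderiv_apply_sum' (f : EuclideanSpace ℝ (Fin n) → EuclideanSpace ℝ (Fin n))
    (x v : EuclideanSpace ℝ (Fin n)) :
    fderiv ℝ f x v = ∑ m, v m • fderiv ℝ f x (e m) := by
  conv_lhs => rw [sum_single v]
  rw [map_sum]
  exact Finset.sum_congr rfl fun m _ => by rw [map_smul]

lemma grad_coord (f : EuclideanSpace ℝ (Fin n) → ℝ) (z : EuclideanSpace ℝ (Fin n)) (i : Fin n) :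
    gradient f z i = fderiv ℝ f z (e i) := by
  have h : (inner ℝ (gradient f z) (e i) : ℝ) = fderiv ℝ f z (e i) := by
    rw [gradient, InnerProductSpace.toDual_symm_apply]
  rw [← h]
  simp only [e, EuclideanSpace.inner_single_right]
  simp

lemma grad_contDiffOn {Ω : Set (EuclideanSpace ℝ (Fin n))} (hΩ : IsOpen Ω)
    {F : EuclideanSpace ℝ (Fin n) → ℝ} (hF : ContDiffOn ℝ 3 F Ω) :
    ContDiffOn ℝ 2 (fun z => gradient F z) Ω := by
  rw [contDiffOn_euclidean]
  intro i
  have h1 : ContDiffOn ℝ 2 (fderiv ℝ F) Ω := hF.fderiv_of_isOpen hΩ (by norm_num)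
  have h2 : ContDiffOn ℝ 2 (fun z => fderiv ℝ F z (e i)) Ω :=
    ContDiff.comp_contDiffOn
      (ContinuousLinearMap.apply ℝ ℝ (e i : EuclideanSpace ℝ (Fin n))).contDiff h1
  exact h2.congr fun z _ => grad_coord F z i

lemma hessMat_eq {Ω : Set (EuclideanSpace ℝ (Fin n))} (hΩ : IsOpen Ω)
    {F : EuclideanSpace ℝ (Fin n) → ℝ} (hF : ContDiffOn ℝ 3 F Ω)
    {y : EuclideanSpace ℝ (Fin n)} (hy : y ∈ Ω) (i j : Fin n) :
    hessMat F y i j = fderiv ℝ (fderiv ℝ F) y (e j) (e i) := by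
  have hgd : DifferentiableAt ℝ (fun z => gradient F z) y :=
    ((grad_contDiffOn hΩ hF).contDiffAt (hΩ.mem_nhds hy)).differentiableAt (by norm_num)
  have h1 : hessMat F y i j = fderiv ℝ (fun z => gradient F z i) y (e j) := by
    have := fderiv_comp (𝕜 := ℝ) y
      (EuclideanSpace.proj (𝕜 := ℝ) i).differentiableAt hgd
    have h2 : fderiv ℝ (fun z => (EuclideanSpace.proj (𝕜 := ℝ) i) (gradient F z)) y
        = ((EuclideanSpace.proj (𝕜 := ℝ) i)).comp (fderiv ℝ (fun z => gradient F z) y) := by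
      rw [show (fun z => (EuclideanSpace.proj (𝕜 := ℝ) i) (gradient F z))
          = (⇑(EuclideanSpace.proj (𝕜 := ℝ) i) ∘ fun z => gradient F z) from rfl, this,
        (EuclideanSpace.proj (𝕜 := ℝ) i).fderiv]
    have h3 := congrArg (fun (L : EuclideanSpace ℝ (Fin n) →L[ℝ] ℝ) => L (e j)) h2
    simpa [hessMat, e] using h3.symm
  rw [h1]
  have h4 : (fun z => gradient F z i) = fun z => fderiv ℝ F z (e i) := by
    funext z; exact grad_coord F z i
  rw [h4]
  have hfd : DifferentiableAt ℝ (fderiv ℝ F) y :=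
    ((hF.fderiv_of_isOpen hΩ (by norm_num) :
        ContDiffOn ℝ 2 (fderiv ℝ F) Ω).contDiffAt (hΩ.mem_nhds hy)).differentiableAt
      (by norm_num)
  have h5 : (fun z => fderiv ℝ F z (e i))
      = fun z => (ContinuousLinearMap.apply ℝ ℝ (e i : EuclideanSpace ℝ (Fin n)))
          (fderiv ℝ F z) := rfl
  rw [h5]
  have h6 := fderiv_comp (𝕜 := ℝ) y
    (ContinuousLinearMap.apply ℝ ℝ (e i : EuclideanSpace ℝ (Fin n))).differentiableAt hfd
  have h7 : fderiv ℝ (fun z => (ContinuousLinearMap.apply ℝ ℝ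
        (e i : EuclideanSpace ℝ (Fin n))) (fderiv ℝ F z)) y
      = (ContinuousLinearMap.apply ℝ ℝ (e i : EuclideanSpace ℝ (Fin n))).comp
          (fderiv ℝ (fderiv ℝ F) y) := by
    rw [show (fun z => (ContinuousLinearMap.apply ℝ ℝ
        (e i : EuclideanSpace ℝ (Fin n))) (fderiv ℝ F z))
        = (⇑(ContinuousLinearMap.apply ℝ ℝ (e i : EuclideanSpace ℝ (Fin n))) ∘ fderiv ℝ F)
        from rfl, h6, ContinuousLinearMap.fderiv]
  rw [h7]
  rfl

lemma hess_symm {Ω : Set (EuclideanSpace ℝ (Fin n))} (hΩ : IsOpen Ω)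
    {F : EuclideanSpace ℝ (Fin n) → ℝ} (hF : ContDiffOn ℝ 3 F Ω)
    {y : EuclideanSpace ℝ (Fin n)} (hy : y ∈ Ω) (i j : Fin n) :
    hessMat F y i j = hessMat F y j i := by
  rw [hessMat_eq hΩ hF hy i j, hessMat_eq hΩ hF hy j i]
  exact ((hF.contDiffAt (hΩ.mem_nhds hy)).of_le (m := 2) (by norm_num)).isSymmSndFDerivAt
    (by simp) (e j) (e i)

end LegendreAux

open LegendreAux in
/-- Change of variables for the Laplace-type operator under the Legendre transform:
`Σ_{j,k} (Hess F(ξ))⁻¹_{jk} ∂²(g ∘ ∇F)/∂ξ_j∂ξ_k (ξ)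
  = Σ_j ∂_{x_j} (Σ_k (Hess u)⁻¹_{jk} ∂g/∂x_k)` at `x = ∇F(ξ)`. -/
theorem legendre_laplacian_change_of_variables {n : ℕ}
    (Ω P : Set (EuclideanSpace ℝ (Fin n))) (hΩ : IsOpen Ω) (hP : IsOpen P)
    (F : EuclideanSpace ℝ (Fin n) → ℝ)
    (ξ : EuclideanSpace ℝ (Fin n) → EuclideanSpace ℝ (Fin n))
    (hF : ContDiffOn ℝ 3 F Ω)
    (hHessInv : ∀ y ∈ Ω, IsUnit (hessMat F y))
    (hbij : Set.BijOn (fun y => gradient F y) Ω P)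
    (hξmem : ∀ x ∈ P, ξ x ∈ Ω)
    (hξright : ∀ x ∈ P, gradient F (ξ x) = x)
    (hξleft : ∀ y ∈ Ω, ξ (gradient F y) = y)
    (hξC2 : ContDiffOn ℝ 2 ξ P)
    (u : EuclideanSpace ℝ (Fin n) → ℝ)
    (hu : ∀ x, u x = (inner ℝ x (ξ x) : ℝ) - F (ξ x))
    (hHessu : ∀ x ∈ P, hessMat u x = (hessMat F (ξ x))⁻¹)
    (g : EuclideanSpace ℝ (Fin n) → ℝ)
    (hg : ContDiffOn ℝ 2 g P) :
    ∀ y ∈ Ω,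
      (∑ j, ∑ k, (hessMat F y)⁻¹ j k *
          fderiv ℝ (fun η => fderiv ℝ (fun ζ => g (gradient F ζ)) η
            (EuclideanSpace.single k 1)) y (EuclideanSpace.single j 1)) =
        ∑ j, fderiv ℝ
          (fun x => ∑ k, (hessMat u x)⁻¹ j k *
            fderiv ℝ g x (EuclideanSpace.single k 1))
          (gradient F y) (EuclideanSpace.single j 1) := by
  intro y hy
  set x : EuclideanSpace ℝ (Fin n) := gradient F y with hxdef
  have hx : x ∈ P := hbij.mapsTo hy
  -- basic differentiability facts
  have hgradC2 : ContDiffOn ℝ 2 (fun z => gradient F z) Ω := grad_contDiffOn hΩ hF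
  have hgradDiff : ∀ z ∈ Ω, DifferentiableAt ℝ (fun w => gradient F w) z := fun z hz =>
    (hgradC2.contDiffAt (hΩ.mem_nhds hz)).differentiableAt (by norm_num)
  have hgDiff : ∀ z ∈ P, DifferentiableAt ℝ g z := fun z hz =>
    (hg.contDiffAt (hP.mem_nhds hz)).differentiableAt (by norm_num)
  -- ψ j : the "nice" representative of the function differentiated on the RHS
  set ψ : Fin n → EuclideanSpace ℝ (Fin n) → ℝ := fun j x' =>
    ∑ k, hessMat F (ξ x') j k * fderiv ℝ g x' (e k) with hψdef
  -- the RHS functions agree with ψ j on P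
  have hψeq : ∀ j, ∀ x' ∈ P,
      (∑ k, (hessMat u x')⁻¹ j k * fderiv ℝ g x' (EuclideanSpace.single k 1)) = ψ j x' := by
    intro j x' hx'
    have hdet : IsUnit (hessMat F (ξ x')).det :=
      (Matrix.isUnit_iff_isUnit_det _).1 (hHessInv _ (hξmem _ hx'))
    rw [hψdef]
    refine Finset.sum_congr rfl fun k _ => ?_
    rw [hHessu x' hx', Matrix.nonsing_inv_nonsing_inv _ hdet]
    rfl
  -- differentiability of ψ j at points of P
  have hψdiff : ∀ j, ∀ x' ∈ P, DifferentiableAt ℝ (ψ j) x' := by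
    intro j x' hx'
    rw [hψdef]
    apply DifferentiableAt.fun_sum
    intro k _
    apply DifferentiableAt.mul
    · -- x'' ↦ hessMat F (ξ x'') j k
      have hHC1 : ContDiffOn ℝ 1 (fderiv ℝ (fun z => gradient F z)) Ω :=
        hgradC2.fderiv_of_isOpen hΩ (by norm_num)
      have h1 : ContDiffOn ℝ 1
          (fun z => fderiv ℝ (fun w => gradient F w) z (e k) j) Ω := by
        have := ContDiff.comp_contDiffOn
          ((EuclideanSpace.proj (𝕜 := ℝ) j).contDiff.comp
            (ContinuousLinearMap.apply ℝ (EuclideanSpace ℝ (Fin n))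
              (e k : EuclideanSpace ℝ (Fin n))).contDiff) hHC1
        exact this
      have h2 : ContDiffOn ℝ 1 (fun x'' => hessMat F (ξ x'') j k) P := by
        have hcomp := h1.comp (hξC2.of_le (by norm_num)) (fun z hz => hξmem z hz)
        exact hcomp.congr fun z _ => rfl
      exact (h2.contDiffAt (hP.mem_nhds hx')).differentiableAt one_ne_zero
    · -- x'' ↦ fderiv g x'' (e k)
      have h1 : ContDiffOn ℝ 1 (fderiv ℝ g) P := hg.fderiv_of_isOpen hP (by norm_num)
      have h2 : ContDiffOn ℝ 1 (fun z => fderiv ℝ g z (e k)) P :=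
        ContDiff.comp_contDiffOn
          (ContinuousLinearMap.apply ℝ ℝ (e k : EuclideanSpace ℝ (Fin n))).contDiff h1
      exact (h2.contDiffAt (hP.mem_nhds hx')).differentiableAt one_ne_zero
  -- Step C : ψ j ∘ ∇F = ∂_j (g ∘ ∇F) on Ω
  have hC : ∀ j, ∀ η ∈ Ω,
      ψ j (gradient F η) = fderiv ℝ (fun ζ => g (gradient F ζ)) η (e j) := by
    intro j η hη
    have hηP : gradient F η ∈ P := hbij.mapsTo hη
    have hchain : fderiv ℝ (fun ζ => g (gradient F ζ)) η
        = (fderiv ℝ g (gradient F η)).comp (fderiv ℝ (fun w => gradient F w) η) := by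
      exact fderiv_comp (𝕜 := ℝ) η (hgDiff _ hηP) (hgradDiff _ hη)
    rw [hchain]
    have : ((fderiv ℝ g (gradient F η)).comp (fderiv ℝ (fun w => gradient F w) η)) (e j)
        = fderiv ℝ g (gradient F η) (fderiv ℝ (fun w => gradient F w) η (e j)) := rfl
    rw [this, fderiv_apply_sum]
    rw [hψdef]
    simp only [hξleft η hη]
    refine Finset.sum_congr rfl fun k _ => ?_
    have hk : (fderiv ℝ (fun w => gradient F w) η (e j)) k = hessMat F η k j := rfl
    rw [hk, hess_symm hΩ hF hη k j]
  -- Step D : compute each RHS term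
  have hRHS : ∀ j, fderiv ℝ
      (fun x' => ∑ k, (hessMat u x')⁻¹ j k * fderiv ℝ g x' (EuclideanSpace.single k 1))
      x (e j)
      = ∑ m, (hessMat F y)⁻¹ m j *
          fderiv ℝ (fun η => fderiv ℝ (fun ζ => g (gradient F ζ)) η (e j)) y (e m) := by
    intro j
    -- replace by ψ j
    have heq1 : fderiv ℝ
        (fun x' => ∑ k, (hessMat u x')⁻¹ j k * fderiv ℝ g x' (EuclideanSpace.single k 1)) x
        = fderiv ℝ (ψ j) x := by
      apply Filter.EventuallyEq.fderiv_eq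
      filter_upwards [hP.mem_nhds hx] with z hz
      exact hψeq j z hz
    rw [heq1]
    -- the special vector v
    set v : EuclideanSpace ℝ (Fin n) :=
      (WithLp.equiv 2 (Fin n → ℝ)).symm (fun m => (hessMat F y)⁻¹ m j) with hvdef
    have hvm : ∀ m, v m = (hessMat F y)⁻¹ m j := fun m => rfl
    have hAv : fderiv ℝ (fun w => gradient F w) y v = e j := by
      ext i
      have h1 := congrArg (fun (w : EuclideanSpace ℝ (Fin n)) => w i)
        (fderiv_apply_sum' (fun w => gradient F w) y v)
      simp only at h1
      rw [h1]
      rw [show ((∑ m, v m • fderiv ℝ (fun w => gradient F w) y (e m)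
          : EuclideanSpace ℝ (Fin n)) i)
          = ∑ m, (v m • fderiv ℝ (fun w => gradient F w) y (e m)
          : EuclideanSpace ℝ (Fin n)) i from by rw [WithLp.ofLp_sum, Finset.sum_apply]]
      have h2 : ∀ m, (v m • fderiv ℝ (fun w => gradient F w) y (e m)
          : EuclideanSpace ℝ (Fin n)) i = hessMat F y i m * (hessMat F y)⁻¹ m j := by
        intro m
        have : (fderiv ℝ (fun w => gradient F w) y (e m)) i = hessMat F y i m := rfl
        calc (v m • fderiv ℝ (fun w => gradient F w) y (e m)
            : EuclideanSpace ℝ (Fin n)) i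
            = v m * (fderiv ℝ (fun w => gradient F w) y (e m)) i := rfl
          _ = hessMat F y i m * (hessMat F y)⁻¹ m j := by rw [this, hvm]; ring
      rw [Finset.sum_congr rfl fun m _ => h2 m]
      have hdet : IsUnit (hessMat F y).det :=
        (Matrix.isUnit_iff_isUnit_det _).1 (hHessInv _ hy)
      have h3 : ∑ m, hessMat F y i m * (hessMat F y)⁻¹ m j
          = (hessMat F y * (hessMat F y)⁻¹) i j := (Matrix.mul_apply).symm
      rw [h3, Matrix.mul_nonsing_inv _ hdet]
      simp [e, Matrix.one_apply, EuclideanSpace.single_apply, eq_comm]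
    -- chain rule
    have hchain : fderiv ℝ ((ψ j) ∘ (fun w => gradient F w)) y
        = (fderiv ℝ (ψ j) x).comp (fderiv ℝ (fun w => gradient F w) y) :=
      fderiv_comp (𝕜 := ℝ) y (hψdiff j x hx) (hgradDiff y hy)
    have hkey : fderiv ℝ (ψ j) x (e j)
        = fderiv ℝ ((ψ j) ∘ (fun w => gradient F w)) y v := by
      rw [hchain]
      show fderiv ℝ (ψ j) x (e j)
        = fderiv ℝ (ψ j) x (fderiv ℝ (fun w => gradient F w) y v)
      rw [hAv]
    rw [hkey]
    have heq2 : fderiv ℝ ((ψ j) ∘ (fun w => gradient F w)) y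
        = fderiv ℝ (fun η => fderiv ℝ (fun ζ => g (gradient F ζ)) η (e j)) y := by
      apply Filter.EventuallyEq.fderiv_eq
      filter_upwards [hΩ.mem_nhds hy] with η hη
      exact hC j η hη
    rw [heq2, fderiv_apply_sum]
    exact Finset.sum_congr rfl fun m _ => by rw [hvm]
  -- put everything together
  rw [Finset.sum_comm]
  refine Finset.sum_congr rfl fun j _ => ?_
  have h := hRHS j
  simp only [e] at h
  exact h.symm
end
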